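/- Let Q be a quiver whose underlying unoriented graph is the extended Dynkin diagram K̃, with vertex set {0,1,…,n}, so that the symmetric bilinear form of Q is (v,w) = vᵗC̃w. Then the set of imaginary roots of Q equals the set of nonzero integer multiples of δ, i.e., W·(F ∪ −F) = {rδ : r ∈ ℤ, r ≠ 0}, where δ = (1,d). -/

import Mathlib

open scoped BigOperators
open Matrix

namespace QV

variable {E : Type} {n : ℕ}

abbrev dSrc {I : Type} (s t : E → I) : E ⊕ E → I := Sum.elim s t
abbrev dTgt {I : Type} (s t : E → I) : E ⊕ E → I := Sum.elim t s

def qform {I : Type} [Fintype E] [Fintype I] (s t : E → I) (v w : I → ℤ) : ℤ :=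
  2 * ∑ i, v i * w i - ∑ h : E ⊕ E, v (dSrc s t h) * w (dTgt s t h)

section Roots

variable {I : Type} [Fintype E] [Fintype I] [DecidableEq I]

def reflect (s t : E → I) (i : I) (v : I → ℤ) : I → ℤ :=
  v - qform s t v (Pi.single i 1) • Pi.single i 1

def adjOn (s t : E → I) (supp : Set I) (a b : I) : Prop :=
  a ∈ supp ∧ b ∈ supp ∧ ∃ h : E, (s h = a ∧ t h = b) ∨ (s h = b ∧ t h = a)

def ConnSupp (s t : E → I) (α : I → ℤ) : Prop :=
  ∀ a b : I, α a ≠ 0 → α b ≠ 0 →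
    Relation.ReflTransGen (adjOn s t {i | α i ≠ 0}) a b

def InFund (s t : E → I) (α : I → ℤ) : Prop :=
  α ≠ 0 ∧ (∀ i, 0 ≤ α i) ∧ ConnSupp s t α ∧
    ∀ i, qform s t α (Pi.single i 1) ≤ 0

inductive RClosure (s t : E → I) (S : Set (I → ℤ)) : (I → ℤ) → Prop
  | base (v : I → ℤ) (hv : v ∈ S) : RClosure s t S v
  | step (i : I) (v : I → ℤ) (hv : RClosure s t S v) : RClosure s t S (reflect s t i v)

/-- Imaginary roots: the Weyl orbits of `F ∪ -F`. -/
def ImgRoot (s t : E → I) (α : I → ℤ) : Prop :=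
  RClosure s t {v | InFund s t v ∨ InFund s t (-v)} α

end Roots

def rootSet (C : Matrix (Fin n) (Fin n) ℤ) : Set (Fin n → ℤ) :=
  {α | α ⬝ᵥ (C *ᵥ α) = 2}

def extC (C : Matrix (Fin n) (Fin n) ℤ) (d : Fin n → ℤ) :
    Matrix (Fin (n + 1)) (Fin (n + 1)) ℤ :=
  Matrix.of fun i j =>
    Fin.cases
      (Fin.cases (2 : ℤ) (fun j' => -(∑ k, d k * C k j')) j)
      (fun i' => Fin.cases (-(∑ k, C i' k * d k)) (fun j' => C i' j') j) i

def deltaV (d : Fin n → ℤ) : Fin (n + 1) → ℤ := Fin.cons 1 d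

-- AUX LEMMAS (to insert before the theorem)

lemma aux_edge_exists {I : Type} [Fintype E] [Fintype I] [DecidableEq I]
    (s t : E → I) (i j : I) (hij : i ≠ j)
    (hneg : qform s t (Pi.single i 1) (Pi.single j 1) < 0) :
    ∃ h : E, (s h = i ∧ t h = j) ∨ (s h = j ∧ t h = i) := by
  have h1 : ∑ k : I, (Pi.single i (1:ℤ) : I → ℤ) k * (Pi.single j (1:ℤ) : I → ℤ) k = 0 := by
    apply Finset.sum_eq_zero
    intro k _
    by_cases hk : k = i
    · subst hk
      rw [Pi.single_eq_of_ne hij]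
      ring
    · rw [Pi.single_eq_of_ne hk]; ring
  rw [qform, h1, mul_zero, zero_sub, neg_lt, neg_zero] at hneg
  obtain ⟨h, _, hh⟩ := Finset.exists_ne_zero_of_sum_ne_zero (ne_of_gt hneg)
  have hs : dSrc s t h = i := by
    by_contra hc
    rw [Pi.single_eq_of_ne hc] at hh
    simp at hh
  have ht : dTgt s t h = j := by
    by_contra hc
    rw [Pi.single_eq_of_ne hc] at hh
    simp at hh
  cases h with
  | inl e => exact ⟨e, Or.inl ⟨hs, ht⟩⟩
  | inr e => exact ⟨e, Or.inr ⟨ht, hs⟩⟩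

section AuxExt

variable (C : Matrix (Fin n) (Fin n) ℤ) (d : Fin n → ℤ)

@[simp] lemma aux_extC_00 : extC C d 0 0 = 2 := rfl
@[simp] lemma aux_extC_0s (j : Fin n) : extC C d 0 j.succ = -(∑ k, d k * C k j) := rfl
@[simp] lemma aux_extC_s0 (i : Fin n) : extC C d i.succ 0 = -(∑ k, C i k * d k) := rfl
@[simp] lemma aux_extC_ss (i j : Fin n) : extC C d i.succ j.succ = C i j := rfl
@[simp] lemma aux_deltaV_0 : deltaV d 0 = 1 := rfl
@[simp] lemma aux_deltaV_s (i : Fin n) : deltaV d i.succ = d i := rfl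

lemma aux_hd2 (hd : d ⬝ᵥ (C *ᵥ d) = 2) : ∑ i, d i * ∑ k, C i k * d k = 2 := by
  simpa [dotProduct, mulVec] using hd

lemma aux_vecMul_delta (hd : d ⬝ᵥ (C *ᵥ d) = 2) : deltaV d ᵥ* extC C d = 0 := by
  have h2 := aux_hd2 C d hd
  funext j
  simp only [vecMul, dotProduct, Pi.zero_apply]
  rw [Fin.sum_univ_succ]
  refine Fin.cases ?_ (fun j' => ?_) j
  · simp only [aux_deltaV_0, aux_extC_00, aux_deltaV_s, aux_extC_s0, mul_neg,
      Finset.sum_neg_distrib]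
    linarith
  · simp only [aux_deltaV_0, aux_extC_0s, aux_deltaV_s, aux_extC_ss, one_mul]
    ring

lemma aux_mulVec_delta (hd : d ⬝ᵥ (C *ᵥ d) = 2) : extC C d *ᵥ deltaV d = 0 := by
  have h2 := aux_hd2 C d hd
  funext i
  simp only [mulVec, dotProduct, Pi.zero_apply]
  rw [Fin.sum_univ_succ]
  refine Fin.cases ?_ (fun i' => ?_) i
  · simp only [aux_deltaV_0, aux_extC_00, aux_deltaV_s, aux_extC_0s, neg_mul,
      Finset.sum_neg_distrib, Finset.sum_mul]
    have hc : ∑ j : Fin n, ∑ k : Fin n, d k * C k j * d j = 2 := by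
      rw [Finset.sum_comm]
      calc ∑ k : Fin n, ∑ j : Fin n, d k * C k j * d j
          = ∑ k : Fin n, d k * ∑ j : Fin n, C k j * d j :=
            Finset.sum_congr rfl fun k _ => by
              rw [Finset.mul_sum]; exact Finset.sum_congr rfl fun j _ => by ring
        _ = 2 := h2
    linarith
  · simp only [aux_deltaV_0, aux_extC_s0, aux_deltaV_s, aux_extC_ss, neg_mul, one_mul]
    ring

lemma aux_cons_form (y z : Fin n → ℤ) :
    (Fin.cons 0 y) ⬝ᵥ (extC C d *ᵥ (Fin.cons 0 z)) = y ⬝ᵥ (C *ᵥ z) := by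
  simp only [dotProduct, mulVec, Fin.sum_univ_succ, Fin.cons_zero, Fin.cons_succ,
    zero_mul, mul_zero, zero_add, add_zero, aux_extC_ss]

lemma aux_key (hd : d ⬝ᵥ (C *ᵥ d) = 2) (u : Fin (n+1) → ℤ) :
    u ⬝ᵥ (extC C d *ᵥ u)
      = (fun i => u i.succ - u 0 * d i) ⬝ᵥ (C *ᵥ fun i => u i.succ - u 0 * d i) := by
  set y : Fin n → ℤ := fun i => u i.succ - u 0 * d i with hy
  have hu : u = u 0 • deltaV d + Fin.cons 0 y := by
    funext i
    refine Fin.cases ?_ (fun i' => ?_) i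
    · simp
    · simp [hy]
  calc u ⬝ᵥ (extC C d *ᵥ u)
      = (u 0 • deltaV d + Fin.cons 0 y) ⬝ᵥ (extC C d *ᵥ (u 0 • deltaV d + Fin.cons 0 y)) := by
        rw [← hu]
    _ = y ⬝ᵥ (C *ᵥ y) := by
        rw [mulVec_add, mulVec_smul, aux_mulVec_delta C d hd, dotProduct_add, add_dotProduct,
          add_dotProduct, smul_dotProduct, smul_dotProduct, dotProduct_smul]
        have h1 : deltaV d ⬝ᵥ (extC C d *ᵥ Fin.cons 0 y) = 0 := by
          rw [dotProduct_mulVec, aux_vecMul_delta C d hd, zero_dotProduct]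
        rw [h1, aux_cons_form C d]
        simp

lemma aux_posInt (hpos : ∀ u : Fin n → ℝ, u ≠ 0 → 0 < u ⬝ᵥ ((C.map (Int.cast : ℤ → ℝ)) *ᵥ u))
    (y : Fin n → ℤ) (hy : y ≠ 0) : 0 < y ⬝ᵥ (C *ᵥ y) := by
  have hu : (fun i => (y i : ℝ)) ≠ 0 := by
    intro h
    apply hy
    funext i
    have := congrFun h i
    simpa using this
  have h := hpos _ hu
  have hc : ((y ⬝ᵥ (C *ᵥ y) : ℤ) : ℝ)
      = (fun i => (y i : ℝ)) ⬝ᵥ ((C.map (Int.cast : ℤ → ℝ)) *ᵥ fun i => (y i : ℝ)) := by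
    push_cast [dotProduct, mulVec, Matrix.map_apply]
    rfl
  rw [← hc] at h
  exact_mod_cast h

lemma aux_d_pos (hsymm : C.IsSymm) (hdiag : ∀ i, C i i = 2)
    (hoff : ∀ i j, i ≠ j → C i j = 0 ∨ C i j = -1)
    (hconn : ∀ i j : Fin n, Relation.ReflTransGen (fun a b => a ≠ b ∧ C a b = -1) i j)
    (hd : d ⬝ᵥ (C *ᵥ d) = 2) (hdpos : 0 ≤ d)
    (hdmax : ∀ α, α ⬝ᵥ (C *ᵥ α) = 2 → 0 ≤ α → α ≤ d) :
    ∀ i, 0 < d i := by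
  by_contra hcon
  push_neg at hcon
  obtain ⟨j, hj⟩ := hcon
  have hdj : d j = 0 := le_antisymm hj (hdpos j)
  have hdne : d ≠ 0 := by
    intro h
    rw [h] at hd
    simp [dotProduct] at hd
  obtain ⟨a, ha⟩ := Function.ne_iff.mp hdne
  simp only [Pi.zero_apply] at ha
  have haux : ∀ b, Relation.ReflTransGen (fun a b => a ≠ b ∧ C a b = -1) a b → d b = 0 →
      ∃ x y : Fin n, x ≠ y ∧ C x y = -1 ∧ d x ≠ 0 ∧ d y = 0 := by
    intro b h
    induction h with
    | refl => exact fun h0 => absurd h0 ha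
    | @tail b c hab hbc ih =>
        intro h0
        by_cases hb : d b = 0
        · exact ih hb
        · exact ⟨b, c, hbc.1, hbc.2, hb, h0⟩
  obtain ⟨x, y, hxy, hCxy, hdx, hdy⟩ := haux j (hconn a j) hdj
  set e : ℤ := ∑ k, d k * C k y with he
  have hxpos : 0 < d x := lt_of_le_of_ne (hdpos x) (Ne.symm hdx)
  have heneg : e < 0 := by
    have hsplit : (∑ k ∈ Finset.univ.erase x, d k * C k y) + d x * C x y = e :=
      Finset.sum_erase_add _ _ (Finset.mem_univ x)
    have h1 : (∑ k ∈ Finset.univ.erase x, d k * C k y) ≤ 0 := by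
      apply Finset.sum_nonpos
      intro k hk
      by_cases hky : k = y
      · subst hky; rw [hdy]; simp
      · rcases hoff k y hky with h | h
        · rw [h]; simp
        · rw [h]; have h0 : (0:ℤ) ≤ d k := hdpos k; linarith
    have h2 : d x * C x y = -(d x) := by rw [hCxy]; ring
    linarith
  set d' : Fin n → ℤ := d - e • Pi.single y 1 with hd'
  have hroot : d' ⬝ᵥ (C *ᵥ d') = 2 := by
    have hmv : C *ᵥ Pi.single y (1:ℤ) = fun i => C i y * 1 := mulVec_single C y 1
    have hA : d ⬝ᵥ (C *ᵥ Pi.single y (1:ℤ)) = e := by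
      rw [hmv, he]; simp [dotProduct]
    have hB : (Pi.single y (1:ℤ)) ⬝ᵥ (C *ᵥ d) = e := by
      rw [single_dotProduct, he]
      simp only [mulVec, dotProduct, one_mul]
      exact Finset.sum_congr rfl fun k _ => by
        have hck : C k y = C y k := by
          have := congrFun (congrFun hsymm.eq k) y
          simpa [Matrix.transpose_apply] using this.symm
        rw [hck]; ring
    have hC2 : (Pi.single y (1:ℤ)) ⬝ᵥ (C *ᵥ Pi.single y (1:ℤ)) = 2 := by
      rw [hmv, single_dotProduct]
      simp [hdiag y]
    rw [hd']
    simp only [sub_dotProduct, mulVec_sub, mulVec_smul, dotProduct_sub, dotProduct_smul,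
      smul_dotProduct]
    rw [hA, hB, hC2, hd]
    simp only [smul_eq_mul]
    ring
  have hnn : (0:Fin n → ℤ) ≤ d' := by
    intro k
    by_cases hky : k = y
    · subst hky
      simp only [hd', Pi.zero_apply, Pi.sub_apply, Pi.smul_apply, Pi.single_eq_same,
        smul_eq_mul, mul_one, hdy]
      linarith
    · simp only [hd', Pi.zero_apply, Pi.sub_apply, Pi.smul_apply, Pi.single_eq_of_ne hky,
        smul_eq_mul, mul_zero, sub_zero]
      exact hdpos k
  have hle := hdmax d' hroot hnn y
  have hval : d' y = d y - e := by
    simp [hd']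
  rw [hval] at hle
  linarith

end AuxExt

theorem lemma_imaginary_roots_of_extended_dynkin_quiver
    (C : Matrix (Fin n) (Fin n) ℤ) (d : Fin n → ℤ)
    (hsymm : C.IsSymm)
    (hdiag : ∀ i, C i i = 2)
    (hoff : ∀ i j, i ≠ j → C i j = 0 ∨ C i j = -1)
    (hpos : ∀ u : Fin n → ℝ, u ≠ 0 → 0 < u ⬝ᵥ ((C.map (Int.cast : ℤ → ℝ)) *ᵥ u))
    (hconn : ∀ i j : Fin n, Relation.ReflTransGen (fun a b => a ≠ b ∧ C a b = -1) i j)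
    (hd : d ∈ rootSet C) (hdpos : 0 ≤ d)
    (hdmax : ∀ α ∈ rootSet C, 0 ≤ α → α ≤ d)
    -- `Q` is a quiver whose underlying unoriented graph is the extended Dynkin
    -- diagram `K̃`, i.e. whose symmetric bilinear form is given by `C̃`
    [Fintype E] (s t : E → Fin (n + 1))
    (hform : ∀ v w : Fin (n + 1) → ℤ, qform s t v w = v ⬝ᵥ (extC C d *ᵥ w)) :
    {β : Fin (n + 1) → ℤ | ImgRoot s t β} =
      {β | ∃ r : ℤ, r ≠ 0 ∧ β = r • deltaV d} := by
  have hd2 : d ⬝ᵥ (C *ᵥ d) = 2 := hd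
  have hdposi : ∀ i, 0 < d i :=
    aux_d_pos C d hsymm hdiag hoff hconn hd2 hdpos (fun α hα h0 => hdmax α hα h0)
  have hvm := aux_vecMul_delta C d hd2
  have hδpos : ∀ i : Fin (n+1), 0 < deltaV d i := fun i =>
    Fin.cases (by simp) (fun i' => by simpa using hdposi i') i
  -- qform of a multiple of δ against anything vanishes
  have hq0 : ∀ (r : ℤ) (w : Fin (n+1) → ℤ), qform s t (r • deltaV d) w = 0 := by
    intro r w
    rw [hform, smul_dotProduct, dotProduct_mulVec, hvm, zero_dotProduct, smul_zero]
  -- the fundamental domain consists of multiples of δ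
  have hfund : ∀ v, InFund s t v → ∃ r : ℤ, r ≠ 0 ∧ v = r • deltaV d := by
    rintro v ⟨hne, hnn, -, hq⟩
    have hqi : ∀ i, qform s t v (Pi.single i 1) = (v ᵥ* extC C d) i := by
      intro i
      rw [hform, dotProduct_mulVec, dotProduct_single, mul_one]
    have hqv : v ⬝ᵥ (extC C d *ᵥ v) ≤ 0 := by
      rw [dotProduct_mulVec]
      have : (v ᵥ* extC C d) ⬝ᵥ v = ∑ i, v i * qform s t v (Pi.single i 1) := by
        simp only [dotProduct, hqi]
        exact Finset.sum_congr rfl fun i _ => by ring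
      rw [this]
      exact Finset.sum_nonpos fun i _ => mul_nonpos_of_nonneg_of_nonpos (hnn i) (hq i)
    have hkey := aux_key C d hd2 v
    set y : Fin n → ℤ := fun i => v i.succ - v 0 * d i with hy
    have hy0 : y = 0 := by
      by_contra hyne
      have := aux_posInt C hpos y hyne
      rw [hkey] at hqv
      linarith
    have hv : v = v 0 • deltaV d := by
      funext i
      refine Fin.cases ?_ (fun i' => ?_) i
      · simp
      · have h := congrFun hy0 i'
        simp only [hy, Pi.zero_apply] at h
        simp only [Pi.smul_apply, aux_deltaV_s, smul_eq_mul]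
        linarith
    refine ⟨v 0, fun h0 => hne ?_, hv⟩
    rw [hv, h0, zero_smul]
  -- InFund holds for positive multiples of δ
  have hIF : ∀ r : ℤ, 0 < r → InFund s t (r • deltaV d) := by
    intro r hr
    have hsm : ∀ i, (r • deltaV d) i = r * deltaV d i := fun i => rfl
    have hmem : ∀ i : Fin (n+1), (r • deltaV d) i ≠ 0 := by
      intro i
      rw [hsm]
      exact mul_ne_zero (ne_of_gt hr) (ne_of_gt (hδpos i))
    -- single entries of the form
    have hqe : ∀ a b : Fin (n+1), qform s t (Pi.single a 1) (Pi.single b 1) = extC C d a b := by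
      intro a b
      rw [hform, mulVec_single, single_dotProduct]
      simp
    -- a vertex adjacent to the extending vertex 0
    have hj0 : ∃ j0 : Fin n, 0 < ∑ k, d k * C k j0 := by
      by_contra hc
      push_neg at hc
      have hsum : ∑ j : Fin n, (∑ k, d k * C k j) * d j = 2 := by
        have h2 := aux_hd2 C d hd2
        calc ∑ j : Fin n, (∑ k, d k * C k j) * d j
            = ∑ j : Fin n, ∑ k : Fin n, d k * C k j * d j :=
              Finset.sum_congr rfl fun j _ => by rw [Finset.sum_mul]
          _ = ∑ k : Fin n, ∑ j : Fin n, d k * C k j * d j := Finset.sum_comm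
          _ = ∑ k : Fin n, d k * ∑ j : Fin n, C k j * d j :=
              Finset.sum_congr rfl fun k _ => by
                rw [Finset.mul_sum]; exact Finset.sum_congr rfl fun j _ => by ring
          _ = 2 := h2
      have : ∑ j : Fin n, (∑ k, d k * C k j) * d j ≤ 0 :=
        Finset.sum_nonpos fun j _ =>
          mul_nonpos_of_nonpos_of_nonneg (hc j) (le_of_lt (hdposi j))
      omega
    obtain ⟨j0, hj0⟩ := hj0
    -- connectivity of the whole extended diagram
    set S : Set (Fin (n+1)) := {i | (r • deltaV d) i ≠ 0} with hS
    have hSall : ∀ i, i ∈ S := fun i => hmem i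
    have hadj : ∀ a b : Fin (n+1), a ≠ b → extC C d a b < 0 → adjOn s t S a b := by
      intro a b hab hneg
      obtain ⟨e, he⟩ := aux_edge_exists s t a b hab (by rw [hqe]; exact hneg)
      exact ⟨hSall a, hSall b, e, he⟩
    have hbase : ∀ i j : Fin n, Relation.ReflTransGen (adjOn s t S) i.succ j.succ := by
      intro i j
      refine Relation.ReflTransGen.lift Fin.succ (fun x y hxy => ?_) i j (hconn i j)
      refine hadj x.succ y.succ (fun h => hxy.1 (Fin.succ_injective n h)) ?_
      rw [aux_extC_ss, hxy.2]
      norm_num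
    have he0 : adjOn s t S 0 j0.succ := by
      refine hadj 0 j0.succ (Fin.succ_ne_zero j0).symm ?_
      rw [aux_extC_0s]
      omega
    have he0' : adjOn s t S j0.succ 0 := by
      obtain ⟨_, _, e, he⟩ := he0
      exact ⟨hSall _, hSall _, e, he.symm⟩
    have hpath : ∀ a b : Fin (n+1), Relation.ReflTransGen (adjOn s t S) a b := by
      intro a b
      refine Fin.cases ?_ (fun i => ?_) a
      · refine Fin.cases ?_ (fun j => ?_) b
        · exact Relation.ReflTransGen.refl
        · exact (Relation.ReflTransGen.single he0).trans (hbase j0 j)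
      · refine Fin.cases ?_ (fun j => ?_) b
        · exact (hbase i j0).trans (Relation.ReflTransGen.single he0')
        · exact hbase i j
    refine ⟨?_, ?_, ?_, ?_⟩
    · intro h0
      exact hmem 0 (by rw [h0]; rfl)
    · intro i
      rw [hsm]
      exact le_of_lt (mul_pos hr (hδpos i))
    · intro a b _ _
      exact hpath a b
    · intro i
      rw [hq0]
  -- final assembly
  ext β
  simp only [Set.mem_setOf_eq]
  constructor
  · intro h
    have h' : RClosure s t {v | InFund s t v ∨ InFund s t (-v)} β := h
    clear h
    induction h' with
    | base v hv =>
        rcases hv with h1 | h1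
        · exact hfund v h1
        · obtain ⟨r, hr, hre⟩ := hfund _ h1
          refine ⟨-r, neg_ne_zero.mpr hr, ?_⟩
          rw [neg_smul, ← hre, neg_neg]
    | step i v hv ih =>
        obtain ⟨r, hr, rfl⟩ := ih
        refine ⟨r, hr, ?_⟩
        show reflect s t i (r • deltaV d) = r • deltaV d
        rw [reflect, hq0, zero_smul, sub_zero]
  · rintro ⟨r, hr, rfl⟩
    rcases lt_or_gt_of_ne hr with hneg | hposr
    · refine RClosure.base _ (Or.inr ?_)
      have : -(r • deltaV d) = (-r) • deltaV d := (neg_smul r (deltaV d)).symm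
      rw [this]
      exact hIF (-r) (by omega)
    · exact RClosure.base _ (Or.inl (hIF r hposr))

end QV
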